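/- Let S ∈ ℝ^{N×K} be a matrix whose k-th column is s_k = ε_k e_{π_k} for some signs ε_k ∈ {−1,+1} and indices π_k ∈ {1,…,N} (a TH matrix realization with N_s = 1), let η ≥ 0 and α > 0, and define the linear receiver Wᵀ = Sᵀ(η SSᵀ + α I)^{−1} (SUMF for η = 0, MMSE for η = 1, α = 1/γ, and decorrelator in the limit η = 1, α → 0⁺). Then the effective channel matrix G = WᵀS satisfies G_{ij} = ρ_{ij}/(α + η v_i) for all i, j, and the noise covariance factor satisfies (WᵀW)_{ij} = ρ_{ij}/(α + η v_i)², where ρ_{ij} = s_iᵀs_j ∈ {−1,0,1} and v_i = #{k ≤ K : π_k = π_i} = Σ_{k=1}^K |ρ_{ik}|. -/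

import Mathlib

open Matrix

def thMatrix {N K : ℕ} (π : Fin K → Fin N) (ε : Fin K → ℝ) :
    Matrix (Fin N) (Fin K) ℝ :=
  fun i k => if π k = i then ε k else 0

def colDot {N K : ℕ} (S : Matrix (Fin N) (Fin K) ℝ) (i j : Fin K) : ℝ :=
  ∑ n : Fin N, S n i * S n j

def suppCount {N K : ℕ} (π : Fin K → Fin N) (i : Fin K) : ℕ :=
  (Finset.univ.filter fun k => π k = π i).card

section aux
variable {N K : ℕ} (π : Fin K → Fin N) (ε : Fin K → ℝ)

lemma colDot_eq (hε : ∀ k, ε k = 1 ∨ ε k = -1) (i j : Fin K) :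
    colDot (thMatrix π ε) i j = if π j = π i then ε i * ε j else 0 := by
  unfold colDot thMatrix
  rw [Finset.sum_eq_single (π i)]
  · simp only [if_pos rfl]
    by_cases h : π j = π i <;> simp [h, eq_comm]
  · intro n _ hn
    simp [Ne.symm hn]
  · simp

lemma SST_eq (hε : ∀ k, ε k = 1 ∨ ε k = -1) :
    thMatrix π ε * (thMatrix π ε)ᵀ =
      Matrix.diagonal (fun n => ((Finset.univ.filter fun k => π k = n).card : ℝ)) := by
  ext n m
  simp only [Matrix.mul_apply, Matrix.transpose_apply, thMatrix, Matrix.diagonal_apply]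
  by_cases h : n = m
  · subst h
    simp only [if_pos rfl]
    rw [← Finset.sum_boole]
    apply Finset.sum_congr rfl
    intro k _
    by_cases hk : π k = n
    · simp only [if_pos hk]
      rcases hε k with h1 | h1 <;> simp [h1]
    · simp [hk]
  · simp only [if_neg h]
    apply Finset.sum_eq_zero
    intro k _
    by_cases hk : π k = n
    · simp [hk, h, hk ▸ h]
    · simp [hk]

lemma entry_diag (w : Fin N → ℝ) (i j : Fin K) :
    ((thMatrix π ε)ᵀ * Matrix.diagonal w * thMatrix π ε) i j =
      (if π j = π i then ε i * ε j else 0) * w (π i) := by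
  simp only [Matrix.mul_apply, Matrix.mul_diagonal, Matrix.transpose_apply, thMatrix]
  rw [Finset.sum_eq_single (π i)]
  · by_cases h : π j = π i <;> simp [h, eq_comm] <;> ring
  · intro n _ hn
    simp [Ne.symm hn]
  · simp

end aux

/-- Let `S` be an `N×K` TH matrix realization with `N_s = 1` (columns
`ε_k e_{π_k}`), let `η ≥ 0`, `α > 0`, and consider the linear receiver
`Wᵀ = Sᵀ(η SSᵀ + α I)⁻¹` (SUMF for `η = 0`; MMSE for `η = 1`, `α = 1/γ`; decorrelator in
the limit `η = 1`, `α → 0⁺`).  Then `ρ_ij = s_iᵀs_j ∈ {0, 1, −1}`,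
`v_i = #{k : π_k = π_i} = Σ_k |ρ_ik|`, the effective channel `G = WᵀS` satisfies
`G_ij = ρ_ij/(α + η v_i)`, and the noise covariance factor satisfies
`(WᵀW)_ij = ρ_ij/(α + η v_i)²`. -/
theorem linear_receiver_effective_channel (N K : ℕ)
    (π : Fin K → Fin N) (ε : Fin K → ℝ) (hε : ∀ k, ε k = 1 ∨ ε k = -1)
    (η α : ℝ) (hη : 0 ≤ η) (hα : 0 < α) :
    (∀ i j : Fin K, colDot (thMatrix π ε) i j = 0 ∨ colDot (thMatrix π ε) i j = 1 ∨
        colDot (thMatrix π ε) i j = -1) ∧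
    (∀ i : Fin K, (suppCount π i : ℝ) = ∑ k : Fin K, |colDot (thMatrix π ε) i k|) ∧
    (∀ i j : Fin K,
      (((thMatrix π ε)ᵀ *
          (η • (thMatrix π ε * (thMatrix π ε)ᵀ) + α • (1 : Matrix (Fin N) (Fin N) ℝ))⁻¹) *
        thMatrix π ε) i j =
      colDot (thMatrix π ε) i j / (α + η * (suppCount π i : ℝ))) ∧
    (∀ i j : Fin K,
      (((thMatrix π ε)ᵀ *
          (η • (thMatrix π ε * (thMatrix π ε)ᵀ) + α • (1 : Matrix (Fin N) (Fin N) ℝ))⁻¹) *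
        ((thMatrix π ε)ᵀ *
          (η • (thMatrix π ε * (thMatrix π ε)ᵀ) + α • (1 : Matrix (Fin N) (Fin N) ℝ))⁻¹)ᵀ)
        i j =
      colDot (thMatrix π ε) i j / (α + η * (suppCount π i : ℝ)) ^ 2) := by
  set S := thMatrix π ε with hS
  set c : Fin N → ℝ := fun n => ((Finset.univ.filter fun k => π k = n).card : ℝ) with hc
  set d : Fin N → ℝ := fun n => η * c n + α with hd
  have hcnonneg : ∀ n, 0 ≤ c n := fun n => Nat.cast_nonneg _
  have hdpos : ∀ n, 0 < d n := fun n =>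
    add_pos_of_nonneg_of_pos (mul_nonneg hη (hcnonneg n)) hα
  have hM : η • (S * Sᵀ) + α • (1 : Matrix (Fin N) (Fin N) ℝ) = Matrix.diagonal d := by
    rw [SST_eq π ε hε]
    ext n m
    by_cases h : n = m <;> simp [Matrix.diagonal_apply, Matrix.one_apply, h, hd, hc]
  have hMinv : (η • (S * Sᵀ) + α • (1 : Matrix (Fin N) (Fin N) ℝ))⁻¹ =
      Matrix.diagonal (fun n => (d n)⁻¹) := by
    apply Matrix.inv_eq_right_inv
    rw [hM, Matrix.diagonal_mul_diagonal]
    convert Matrix.diagonal_one with n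
    exact mul_inv_cancel₀ (hdpos n).ne'
  have hsupp : ∀ i : Fin K, c (π i) = (suppCount π i : ℝ) := fun i => rfl
  refine ⟨?_, ?_, ?_, ?_⟩
  · intro i j
    rw [colDot_eq π ε hε]
    by_cases h : π j = π i
    · rcases hε i with h1 | h1 <;> rcases hε j with h2 | h2 <;> simp [h, h1, h2]
    · simp [h]
  · intro i
    rw [suppCount, Finset.card_filter]
    push_cast
    apply Finset.sum_congr rfl
    intro k _
    rw [colDot_eq π ε hε]
    by_cases h : π k = π i
    · rcases hε i with h1 | h1 <;> rcases hε k with h2 | h2 <;> simp [h, h1, h2]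
    · simp [h]
  · intro i j
    rw [hMinv, Matrix.mul_assoc, ← Matrix.mul_assoc, entry_diag π ε, colDot_eq π ε hε,
      ← hsupp i]
    have hcomm : d (π i) = α + η * c (π i) := add_comm _ _
    rw [hcomm, div_eq_mul_inv]
  · intro i j
    rw [hMinv]
    have : (Matrix.diagonal (fun n => (d n)⁻¹) : Matrix (Fin N) (Fin N) ℝ)ᵀ =
        Matrix.diagonal (fun n => (d n)⁻¹) := Matrix.diagonal_transpose _
    rw [Matrix.transpose_mul, this, Matrix.transpose_transpose]
    have hre : Sᵀ * Matrix.diagonal (fun n => (d n)⁻¹) *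
        (Matrix.diagonal (fun n => (d n)⁻¹) * S) =
        Sᵀ * Matrix.diagonal (fun n => ((d n)⁻¹)^2) * S := by
      rw [Matrix.mul_assoc, ← Matrix.mul_assoc (Matrix.diagonal _),
        Matrix.diagonal_mul_diagonal, ← Matrix.mul_assoc]
      congr 2
      ext n
      ring
    rw [hre, entry_diag π ε, colDot_eq π ε hε, ← hsupp i]
    have hcomm : d (π i) = α + η * c (π i) := add_comm _ _
    rw [hcomm, div_eq_mul_inv, ← inv_pow]
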